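/- Comparison of Dirichlet forms: for every β ≥ 0, every positive integer N divisible by 3, and every function f : Ω_N → ℝ, the complete-graph Dirichlet form is bounded by the nearest-neighbor one: 𝒟_N^β(f,f) ≤ 2 e^{3β} N² D_N^β(f,f). -/

import Mathlib

open Finset Filter Topology MeasureTheory
open scoped BigOperators

attribute [local instance] Classical.propDecidable

namespace ABC

/-- Occupation indicator. Labels: `0 = A`, `1 = B`, `2 = C`. -/
def eta {N : ℕ} (ζ : Fin N → Fin 3) (α : Fin 3) (x : Fin N) : ℝ :=
  if ζ x = α then 1 else 0

/-- The equal-density constraint defining `Ω_N`. -/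
def inOmega {N : ℕ} (ζ : Fin N → Fin 3) : Prop :=
  ∀ α : Fin 3, 3 * (Finset.univ.filter (fun x => ζ x = α)).card = N

/-- The configuration space `Ω_N` as a finite set. -/
noncomputable def OmegaF (N : ℕ) : Finset (Fin N → Fin 3) :=
  Finset.univ.filter (fun ζ => inOmega ζ)

/-- The mean-field Hamiltonian `H_N`. -/
noncomputable def HN {N : ℕ} (ζ : Fin N → Fin 3) : ℝ :=
  (1 / (N : ℝ) ^ 2) *
    ∑ x : Fin N, ∑ y : Fin N,
      if (x : ℕ) < (y : ℕ) then
        eta ζ 0 x * eta ζ 2 y + eta ζ 1 x * eta ζ 0 y + eta ζ 2 x * eta ζ 1 y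
      else 0

/-- The partition function `Z_N^β`. -/
noncomputable def Zpart (N : ℕ) (β : ℝ) : ℝ :=
  ∑ ζ ∈ OmegaF N, Real.exp (-(β * N * HN ζ))

/-- The Gibbs measure `ν_N^β`. -/
noncomputable def nu (N : ℕ) (β : ℝ) (ζ : Fin N → Fin 3) : ℝ :=
  Real.exp (-(β * N * HN ζ)) / Zpart N β

/-- Expectation with respect to `ν_N^β`. -/
noncomputable def expect (N : ℕ) (β : ℝ) (f : (Fin N → Fin 3) → ℝ) : ℝ :=
  ∑ ζ ∈ OmegaF N, nu N β ζ * f ζ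

/-- Variance with respect to `ν_N^β`. -/
noncomputable def varNu (N : ℕ) (β : ℝ) (f : (Fin N → Fin 3) → ℝ) : ℝ :=
  expect N β (fun ζ => (f ζ - expect N β f) ^ 2)

/-- The configuration `ζ^{x,y}` obtained by exchanging the values at `x` and `y`. -/
def exch {N : ℕ} (ζ : Fin N → Fin 3) (x y : Fin N) : Fin N → Fin 3 :=
  fun z => if z = x then ζ y else if z = y then ζ x else ζ z

/-- The gradient `∇_{x,y} f`. -/
def grad {N : ℕ} (f : (Fin N → Fin 3) → ℝ) (x y : Fin N) (ζ : Fin N → Fin 3) : ℝ :=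
  f (exch ζ x y) - f ζ

/-- Cyclic successor `x + 1` in `Z_N`. -/
def fsucc {N : ℕ} (x : Fin N) : Fin N := ⟨(x.val + 1) % N, Nat.mod_lt _ x.pos⟩

/-- Nearest-neighbour jump rates `c_x^{β,N}`. -/
noncomputable def cnn {N : ℕ} (β : ℝ) (x : Fin N) (ζ : Fin N → Fin 3) : ℝ :=
  if (ζ x = 0 ∧ ζ (fsucc x) = 2) ∨ (ζ x = 2 ∧ ζ (fsucc x) = 1) ∨
      (ζ x = 1 ∧ ζ (fsucc x) = 0) then
    Real.exp (-(β / (2 * N)))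
  else Real.exp (β / (2 * N))

/-- Dirichlet form `D_N^β` of the ABC generator. -/
noncomputable def Dnn (N : ℕ) (β : ℝ) (f : (Fin N → Fin 3) → ℝ) : ℝ :=
  (1 / 2) * ∑ x : Fin N, expect N β (fun ζ => cnn β x ζ * (grad f x (fsucc x) ζ) ^ 2)

/-- Complete-graph jump rates `c_{x,y}^{β,N}`. -/
noncomputable def ccg {N : ℕ} (β : ℝ) (x y : Fin N) (ζ : Fin N → Fin 3) : ℝ :=
  (1 / (N : ℝ)) * Real.exp (-(β * N / 2) * (HN (exch ζ x y) - HN ζ))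

/-- Dirichlet form `𝒟_N^β` of the complete-graph ABC generator (the sum over
unordered pairs `{x,y}` is written as half the sum over ordered distinct pairs). -/
noncomputable def Dcg (N : ℕ) (β : ℝ) (f : (Fin N → Fin 3) → ℝ) : ℝ :=
  (1 / 2) * ((1 / 2) * ∑ x : Fin N, ∑ y : Fin N,
    if x ≠ y then expect N β (fun ζ => ccg β x y ζ * (grad f x y ζ) ^ 2) else 0)

/-! ### Auxiliary machinery for the proof -/

section AuxProof

variable {N : ℕ}

lemma exch_apply_eq_comp (ζ : Fin N → Fin 3) (x y z : Fin N) :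
    exch ζ x y z = ζ (Equiv.swap x y z) := by
  simp only [exch, Equiv.swap_apply_def]
  split_ifs <;> rfl

lemma exch_symm (ζ : Fin N → Fin 3) (x y : Fin N) : exch ζ x y = exch ζ y x := by
  funext z; simp only [exch]; split_ifs <;> simp_all

lemma exch_exch (ζ : Fin N → Fin 3) (x y : Fin N) : exch (exch ζ x y) x y = ζ := by
  funext z; simp only [exch]; split_ifs <;> simp_all

lemma exch_conj (ζ : Fin N → Fin 3) (x q y : Fin N) (h1 : x ≠ q) (h2 : x ≠ y) (h3 : q ≠ y) :
    exch (exch (exch ζ q y) x q) q y = exch ζ x y := by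
  funext z; simp only [exch]; split_ifs <;> simp_all

/-- The pair interaction term. -/
def Hterm {N : ℕ} (ζ : Fin N → Fin 3) (u v : Fin N) : ℝ :=
  eta ζ 0 u * eta ζ 2 v + eta ζ 1 u * eta ζ 0 v + eta ζ 2 u * eta ζ 1 v

lemma HN_eq (ζ : Fin N → Fin 3) :
    HN ζ = (1 / (N : ℝ) ^ 2) * ∑ u : Fin N, ∑ v : Fin N,
      if (u : ℕ) < (v : ℕ) then Hterm ζ u v else 0 := rfl

lemma Hterm_nonneg (ζ : Fin N → Fin 3) (u v : Fin N) : 0 ≤ Hterm ζ u v := by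
  unfold Hterm eta; split_ifs <;> norm_num

lemma Hterm_le_one (ζ : Fin N → Fin 3) (u v : Fin N) : Hterm ζ u v ≤ 1 := by
  have h3 : ∀ a : Fin 3, a = 0 ∨ a = 1 ∨ a = 2 := by decide
  unfold Hterm eta
  rcases h3 (ζ u) with h | h | h <;> rw [h] <;> split_ifs <;> simp_all

lemma Hterm_exch (ζ : Fin N → Fin 3) (p q u v : Fin N) :
    Hterm (exch ζ p q) u v = Hterm ζ (Equiv.swap p q u) (Equiv.swap p q v) := by
  unfold Hterm eta
  rw [exch_apply_eq_comp, exch_apply_eq_comp]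
lemma HN_exch_adj (ζ : Fin N → Fin 3) (p q : Fin N) (hq : (q : ℕ) = (p : ℕ) + 1) :
    |HN (exch ζ p q) - HN ζ| ≤ 1 / (N : ℝ) ^ 2 := by
  have hN : 0 < N := p.pos
  have hpq : p ≠ q := by intro h; rw [h] at hq; omega
  set σ := Equiv.swap p q with hσ
  set K : Fin N → Fin N → ℝ := fun u v =>
    if ((σ u : Fin N) : ℕ) < ((σ v : Fin N) : ℕ) then Hterm ζ u v else 0 with hK
  have h1 : HN (exch ζ p q) = (1 / (N : ℝ) ^ 2) * ∑ u : Fin N, ∑ v : Fin N, K u v := by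
    rw [HN_eq]
    congr 1
    calc ∑ x : Fin N, ∑ y : Fin N, (if (x:ℕ) < (y:ℕ) then Hterm (exch ζ p q) x y else 0)
        = ∑ x : Fin N, ∑ y : Fin N, K (σ x) (σ y) := by
          refine Finset.sum_congr rfl fun x _ => Finset.sum_congr rfl fun y _ => ?_
          rw [Hterm_exch]
          simp only [hK, hσ, Equiv.swap_apply_self]
      _ = ∑ u : Fin N, ∑ v : Fin N, K u v := by
          rw [← Equiv.sum_comp σ (fun u => ∑ v : Fin N, K u v)]
          exact Finset.sum_congr rfl fun x _ => Equiv.sum_comp σ (fun v => K (σ x) v)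
  have vne : ∀ {a b : Fin N}, a ≠ b → (a:ℕ) ≠ (b:ℕ) := fun h hv => h (Fin.ext hv)
  have hqp : ¬((q:ℕ) < (p:ℕ)) := by omega
  have hpq' : (p:ℕ) < (q:ℕ) := by omega
  have hpt : ∀ u v : Fin N, K u v - (if (u:ℕ) < (v:ℕ) then Hterm ζ u v else 0)
      = (if u = q ∧ v = p then Hterm ζ q p else 0)
        - (if u = p ∧ v = q then Hterm ζ p q else 0) := by
    intro u v
    simp only [hK, hσ]
    rcases eq_or_ne u p with hup | hup
    · rcases eq_or_ne v p with hvp | hvp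
      · rw [hup, hvp, Equiv.swap_apply_left]
        simp [hpq]
      · rcases eq_or_ne v q with hvq | hvq
        · rw [hup, hvq, Equiv.swap_apply_left, Equiv.swap_apply_right]
          simp [hqp, hpq', hpq]
        · rw [hup, Equiv.swap_apply_left, Equiv.swap_apply_of_ne_of_ne hvp hvq]
          have hiff : ((q:ℕ) < (v:ℕ)) ↔ ((p:ℕ) < (v:ℕ)) := by
            have h1 := vne hvp; have h2 := vne hvq; omega
          simp [hiff, hpq, hvq]
    · rcases eq_or_ne u q with huq | huq
      · rcases eq_or_ne v p with hvp | hvp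
        · rw [huq, hvp, Equiv.swap_apply_right, Equiv.swap_apply_left]
          simp [hpq', hqp, hpq]
        · rcases eq_or_ne v q with hvq | hvq
          · rw [huq, hvq, Equiv.swap_apply_right]
            simp [hpq, Ne.symm hpq]
          · rw [huq, Equiv.swap_apply_right, Equiv.swap_apply_of_ne_of_ne hvp hvq]
            have hiff : ((p:ℕ) < (v:ℕ)) ↔ ((q:ℕ) < (v:ℕ)) := by
              have h1 := vne hvp; have h2 := vne hvq; omega
            simp [hiff, hvp, hvq]
      · rw [Equiv.swap_apply_of_ne_of_ne hup huq]
        rcases eq_or_ne v p with hvp | hvp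
        · rw [hvp, Equiv.swap_apply_left]
          have hiff : ((u:ℕ) < (q:ℕ)) ↔ ((u:ℕ) < (p:ℕ)) := by
            have h1 := vne hup; have h2 := vne huq; omega
          simp [hiff, huq, hup]
        · rcases eq_or_ne v q with hvq | hvq
          · rw [hvq, Equiv.swap_apply_right]
            have hiff : ((u:ℕ) < (p:ℕ)) ↔ ((u:ℕ) < (q:ℕ)) := by
              have h1 := vne hup; have h2 := vne huq; omega
            simp [hiff, huq, hup]
          · rw [Equiv.swap_apply_of_ne_of_ne hvp hvq]
            simp [huq, hup]
  have hsum : HN (exch ζ p q) - HN ζ = (1 / (N : ℝ) ^ 2) * (Hterm ζ q p - Hterm ζ p q) := by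
    rw [h1, HN_eq, ← mul_sub]
    congr 1
    rw [← Finset.sum_sub_distrib]
    calc ∑ u : Fin N, (∑ v : Fin N, K u v - ∑ v : Fin N, if (u:ℕ) < (v:ℕ) then Hterm ζ u v else 0)
        = ∑ u : Fin N, ∑ v : Fin N, ((if u = q ∧ v = p then Hterm ζ q p else 0)
            - (if u = p ∧ v = q then Hterm ζ p q else 0)) := by
          refine Finset.sum_congr rfl fun u _ => ?_
          rw [← Finset.sum_sub_distrib]
          exact Finset.sum_congr rfl fun v _ => hpt u v
      _ = Hterm ζ q p - Hterm ζ p q := by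
          have hsplit : ∀ u : Fin N, ∑ v : Fin N, ((if u = q ∧ v = p then Hterm ζ q p else 0)
              - (if u = p ∧ v = q then Hterm ζ p q else 0))
              = (∑ v : Fin N, if u = q ∧ v = p then Hterm ζ q p else 0)
              - (∑ v : Fin N, if u = p ∧ v = q then Hterm ζ p q else 0) :=
            fun u => Finset.sum_sub_distrib _ _
          rw [Finset.sum_congr rfl (fun u _ => hsplit u), Finset.sum_sub_distrib]
          congr 1
          · calc ∑ u : Fin N, ∑ v : Fin N, (if u = q ∧ v = p then Hterm ζ q p else 0)
                = ∑ u : Fin N, (if u = q then Hterm ζ q p else 0) := by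
                  refine Finset.sum_congr rfl fun u _ => ?_
                  by_cases h : u = q <;> simp [h]
              _ = Hterm ζ q p := by simp
          · calc ∑ u : Fin N, ∑ v : Fin N, (if u = p ∧ v = q then Hterm ζ p q else 0)
                = ∑ u : Fin N, (if u = p then Hterm ζ p q else 0) := by
                  refine Finset.sum_congr rfl fun u _ => ?_
                  by_cases h : u = p <;> simp [h]
              _ = Hterm ζ p q := by simp
  rw [hsum, abs_mul]
  have h2 : |1 / (N : ℝ) ^ 2| = 1 / (N : ℝ) ^ 2 := by
    rw [abs_of_nonneg]; positivity
  rw [h2]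
  have h3 : |Hterm ζ q p - Hterm ζ p q| ≤ 1 := by
    rw [abs_le]
    constructor
    · linarith [Hterm_le_one ζ p q, Hterm_nonneg ζ q p]
    · linarith [Hterm_le_one ζ q p, Hterm_nonneg ζ p q]
  calc 1 / (N:ℝ)^2 * |Hterm ζ q p - Hterm ζ p q| ≤ 1 / (N:ℝ)^2 * 1 := by
        apply mul_le_mul_of_nonneg_left h3; positivity
    _ = 1 / (N:ℝ)^2 := by ring

lemma inOmega_exch {ζ : Fin N → Fin 3} (h : inOmega ζ) (x y : Fin N) :
    inOmega (exch ζ x y) := by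
  intro α
  have hc : (Finset.univ.filter (fun z => exch ζ x y z = α)).card
      = (Finset.univ.filter (fun z => ζ z = α)).card := by
    apply Finset.card_nbij' (fun z => Equiv.swap x y z) (fun z => Equiv.swap x y z)
    · intro a ha
      simp only [Finset.mem_coe, Finset.mem_filter, Finset.mem_univ, true_and] at *
      rw [exch_apply_eq_comp] at ha
      exact ha
    · intro a ha
      simp only [Finset.mem_coe, Finset.mem_filter, Finset.mem_univ, true_and] at *
      rw [exch_apply_eq_comp, Equiv.swap_apply_self]
      exact ha
    · intro a _; exact Equiv.swap_apply_self _ _ _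
    · intro a _; exact Equiv.swap_apply_self _ _ _
  rw [hc]
  exact h α

/-- Apply a list of exchanges (rightmost first). -/
def ap {N : ℕ} (l : List (Fin N × Fin N)) (ζ : Fin N → Fin 3) : Fin N → Fin 3 :=
  l.foldr (fun e ζ => exch ζ e.1 e.2) ζ

lemma ap_nil (ζ : Fin N → Fin 3) : ap [] ζ = ζ := rfl

lemma ap_cons (e : Fin N × Fin N) (l : List (Fin N × Fin N)) (ζ : Fin N → Fin 3) :
    ap (e :: l) ζ = exch (ap l ζ) e.1 e.2 := rfl

lemma ap_append (l₁ l₂ : List (Fin N × Fin N)) (ζ : Fin N → Fin 3) :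
    ap (l₁ ++ l₂) ζ = ap l₁ (ap l₂ ζ) :=
  List.foldr_append

lemma ap_reverse (l : List (Fin N × Fin N)) (ζ : Fin N → Fin 3) :
    ap l.reverse (ap l ζ) = ζ := by
  induction l with
  | nil => rfl
  | cons e l ih =>
    rw [ap_cons, List.reverse_cons, ap_append]
    have h1 : ap [e] (exch (ap l ζ) e.1 e.2) = ap l ζ := by
      rw [show ap [e] (exch (ap l ζ) e.1 e.2) = exch (exch (ap l ζ) e.1 e.2) e.1 e.2 from rfl,
        exch_exch]
    rw [h1, ih]

lemma inOmega_ap {ζ : Fin N → Fin 3} (h : inOmega ζ) (l : List (Fin N × Fin N)) :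
    inOmega (ap l ζ) := by
  induction l with
  | nil => exact h
  | cons e l ih => rw [ap_cons]; exact inOmega_exch ih e.1 e.2

/-- A list of nearest-neighbour (non-wrapping) edges. -/
def Good {N : ℕ} (l : List (Fin N × Fin N)) : Prop :=
  ∀ e ∈ l, ((e.2 : Fin N) : ℕ) = ((e.1 : Fin N) : ℕ) + 1

lemma Good_reverse {l : List (Fin N × Fin N)} (h : Good l) : Good l.reverse :=
  fun e he => h e (List.mem_reverse.mp he)

lemma HN_ap_bound {l : List (Fin N × Fin N)} (hl : Good l) (ζ : Fin N → Fin 3) :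
    |HN (ap l ζ) - HN ζ| ≤ (l.length : ℝ) / (N : ℝ) ^ 2 := by
  induction l with
  | nil => simp [ap_nil]
  | cons e l ih =>
    have h1 := HN_exch_adj (ap l ζ) e.1 e.2 (hl e List.mem_cons_self)
    have h2 := ih (fun e' he' => hl e' (List.mem_cons_of_mem _ he'))
    calc |HN (ap (e :: l) ζ) - HN ζ|
        ≤ |HN (ap (e :: l) ζ) - HN (ap l ζ)| + |HN (ap l ζ) - HN ζ| := abs_sub_le _ _ _
      _ ≤ 1 / (N : ℝ) ^ 2 + (l.length : ℝ) / (N : ℝ) ^ 2 := by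
          rw [ap_cons]; exact add_le_add h1 h2
      _ = ((l.length + 1 : ℕ) : ℝ) / (N : ℝ) ^ 2 := by push_cast; ring
      _ = (((e :: l).length : ℕ) : ℝ) / (N : ℝ) ^ 2 := by simp

/-- The unnormalised Gibbs weight. -/
noncomputable def wt (N : ℕ) (β : ℝ) (ζ : Fin N → Fin 3) : ℝ :=
  Real.exp (-(β * N * HN ζ))

lemma wt_pos (β : ℝ) (ζ : Fin N → Fin 3) : 0 < wt N β ζ := Real.exp_pos _

lemma wt_nonneg (β : ℝ) (ζ : Fin N → Fin 3) : 0 ≤ wt N β ζ := (wt_pos β ζ).le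

lemma wt_le {β : ℝ} (hβ : 0 ≤ β) {ζ ξ : Fin N → Fin 3} {c : ℝ}
    (h : |HN ζ - HN ξ| ≤ c) : wt N β ζ ≤ Real.exp (β * N * c) * wt N β ξ := by
  unfold wt
  rw [← Real.exp_add]
  apply Real.exp_le_exp.2
  have h1 : HN ξ - HN ζ ≤ c := by
    have := neg_abs_le (HN ζ - HN ξ); have := abs_nonneg (HN ζ - HN ξ); linarith [le_abs_self (HN ζ - HN ξ), neg_le_of_abs_le h]
  have h2 : (0:ℝ) ≤ β * N := by positivity
  nlinarith [mul_le_mul_of_nonneg_left h1 h2]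

lemma expect_eq (β : ℝ) (g : (Fin N → Fin 3) → ℝ) :
    expect N β g = (∑ ζ ∈ OmegaF N, wt N β ζ * g ζ) / Zpart N β := by
  unfold expect nu wt
  rw [Finset.sum_div]
  exact Finset.sum_congr rfl fun ζ _ => (div_mul_eq_mul_div _ _ _).trans (rfl)

lemma sum_omega_comp (T Ti : (Fin N → Fin 3) → (Fin N → Fin 3))
    (hT : ∀ ζ, inOmega ζ → inOmega (T ζ)) (hTi : ∀ ζ, inOmega ζ → inOmega (Ti ζ))
    (h1 : ∀ ζ, Ti (T ζ) = ζ) (h2 : ∀ ζ, T (Ti ζ) = ζ)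
    (F : (Fin N → Fin 3) → ℝ) :
    ∑ ζ ∈ OmegaF N, F (T ζ) = ∑ ζ ∈ OmegaF N, F ζ := by
  apply Finset.sum_nbij' (i := T) (j := Ti)
  · intro a ha
    simp only [OmegaF, Finset.mem_filter, Finset.mem_univ, true_and] at *
    exact hT a ha
  · intro a ha
    simp only [OmegaF, Finset.mem_filter, Finset.mem_univ, true_and] at *
    exact hTi a ha
  · intro a _; exact h1 a
  · intro a _; exact h2 a
  · intro a _; rfl

lemma sq_add_bound (A B n : ℝ) (hn : 1 ≤ n) :
    (B + A) ^ 2 ≤ (1 + 1 / n) * A ^ 2 + (1 + n) * B ^ 2 := by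
  have h0 : (0:ℝ) < n := by linarith
  have hdiv : 2 * A * B - n * B ^ 2 ≤ A ^ 2 / n := by
    rw [le_div_iff₀ h0]
    nlinarith [sq_nonneg (A - n * B)]
  have hexp : (1 + 1 / n) * A ^ 2 + (1 + n) * B ^ 2
      = A ^ 2 + A ^ 2 / n + B ^ 2 + n * B ^ 2 := by
    field_simp; ring
  nlinarith

lemma sumS {β : ℝ} (hβ : 0 ≤ β) (hN : 0 < N) (f : (Fin N → Fin 3) → ℝ) :
    ∀ l : List (Fin N × Fin N), Good l →
    ∑ ζ ∈ OmegaF N, wt N β ζ * (f (ap l ζ) - f ζ) ^ 2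
      ≤ (l.length : ℝ) * Real.exp (β * l.length / N) *
        (l.map (fun e => ∑ ζ ∈ OmegaF N, wt N β ζ * (grad f e.1 e.2 ζ) ^ 2)).sum := by
  intro l
  induction l with
  | nil => intro _; simp [ap_nil]
  | cons e l ih =>
    intro hl
    have hle : ((e.2 : Fin N) : ℕ) = ((e.1 : Fin N) : ℕ) + 1 := hl e List.mem_cons_self
    have hlg : Good l := fun e' he' => hl e' (List.mem_cons_of_mem _ he')
    have ihl := ih hlg
    set n := l.length with hn
    have hNr : (0:ℝ) < (N:ℝ) := by exact_mod_cast hN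
    -- the single-edge sums are nonnegative
    have hSg_nonneg : ∀ e' : Fin N × Fin N,
        0 ≤ ∑ ζ ∈ OmegaF N, wt N β ζ * (grad f e'.1 e'.2 ζ) ^ 2 := by
      intro e'
      exact Finset.sum_nonneg fun ζ _ => mul_nonneg (wt_nonneg β ζ) (sq_nonneg _)
    have hMsum_nonneg :
        0 ≤ (l.map (fun e' => ∑ ζ ∈ OmegaF N, wt N β ζ * (grad f e'.1 e'.2 ζ) ^ 2)).sum := by
      apply List.sum_nonneg
      intro x hx
      obtain ⟨e', _, rfl⟩ := List.mem_map.mp hx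
      exact hSg_nonneg e'
    -- bound for the image of the single-edge term under the path
    have hBsum : ∑ ζ ∈ OmegaF N, wt N β ζ * (grad f e.1 e.2 (ap l ζ)) ^ 2
        ≤ Real.exp (β * n / N) *
          ∑ ζ ∈ OmegaF N, wt N β ζ * (grad f e.1 e.2 ζ) ^ 2 := by
      have hre : ∑ ζ ∈ OmegaF N, wt N β ζ * (grad f e.1 e.2 (ap l ζ)) ^ 2
          = ∑ ζ ∈ OmegaF N, wt N β (ap l.reverse ζ) * (grad f e.1 e.2 ζ) ^ 2 := by
        have hco := sum_omega_comp (T := ap l) (Ti := ap l.reverse)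
          (fun ζ hζ => inOmega_ap hζ l) (fun ζ hζ => inOmega_ap hζ l.reverse)
          (fun ζ => ap_reverse l ζ)
          (fun ζ => by
            have := ap_reverse l.reverse ζ
            rwa [List.reverse_reverse] at this)
          (fun ξ => wt N β (ap l.reverse ξ) * (grad f e.1 e.2 ξ) ^ 2)
        rw [← hco]
        refine Finset.sum_congr rfl fun ζ _ => ?_
        rw [ap_reverse]
      rw [hre, Finset.mul_sum]
      apply Finset.sum_le_sum
      intro ζ _
      have hH : |HN (ap l.reverse ζ) - HN ζ| ≤ (n : ℝ) / (N : ℝ) ^ 2 := by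
        have := HN_ap_bound (Good_reverse hlg) ζ
        rwa [List.length_reverse] at this
      have hw : wt N β (ap l.reverse ζ) ≤ Real.exp (β * n / N) * wt N β ζ := by
        have h1 := wt_le hβ hH
        have h2 : β * N * ((n : ℝ) / (N : ℝ) ^ 2) = β * n / N := by
          field_simp
        rwa [h2] at h1
      calc wt N β (ap l.reverse ζ) * (grad f e.1 e.2 ζ) ^ 2
          ≤ (Real.exp (β * n / N) * wt N β ζ) * (grad f e.1 e.2 ζ) ^ 2 :=
            mul_le_mul_of_nonneg_right hw (sq_nonneg _)
        _ = Real.exp (β * n / N) * (wt N β ζ * (grad f e.1 e.2 ζ) ^ 2) := by ring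
    rcases Nat.eq_zero_or_pos n with hn0 | hnpos
    · -- l = []
      have hlnil : l = [] := List.length_eq_zero_iff.mp hn0
      subst hlnil
      simp only [List.map_cons, List.map_nil, List.sum_cons, List.sum_nil, add_zero,
        List.length_cons, List.length_nil]
      have hid : ∑ ζ ∈ OmegaF N, wt N β ζ * (f (ap [e] ζ) - f ζ) ^ 2
          = ∑ ζ ∈ OmegaF N, wt N β ζ * (grad f e.1 e.2 ζ) ^ 2 := by
        refine Finset.sum_congr rfl fun ζ _ => ?_
        rw [ap_cons, ap_nil]
        rfl
      rw [hid]
      have h1 : (1:ℝ) ≤ Real.exp (β * (0 + 1 : ℕ) / N) := by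
        rw [Real.one_le_exp_iff]
        positivity
      push_cast
      nlinarith [hSg_nonneg e, h1]
    · -- main inductive step
      have hn1 : (1:ℝ) ≤ (n:ℝ) := by exact_mod_cast hnpos
      have key : ∑ ζ ∈ OmegaF N, wt N β ζ * (f (ap (e :: l) ζ) - f ζ) ^ 2
          ≤ (1 + 1 / (n:ℝ)) * (∑ ζ ∈ OmegaF N, wt N β ζ * (f (ap l ζ) - f ζ) ^ 2)
            + (1 + (n:ℝ)) * (∑ ζ ∈ OmegaF N, wt N β ζ * (grad f e.1 e.2 (ap l ζ)) ^ 2) := by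
        rw [Finset.mul_sum, Finset.mul_sum, ← Finset.sum_add_distrib]
        apply Finset.sum_le_sum
        intro ζ _
        have hid : f (ap (e :: l) ζ) - f ζ
            = grad f e.1 e.2 (ap l ζ) + (f (ap l ζ) - f ζ) := by
          rw [ap_cons]
          show f (exch (ap l ζ) e.1 e.2) - f ζ = _
          unfold grad
          ring
        have hsq : (f (ap (e :: l) ζ) - f ζ) ^ 2
            ≤ (1 + 1 / (n:ℝ)) * (f (ap l ζ) - f ζ) ^ 2
              + (1 + (n:ℝ)) * (grad f e.1 e.2 (ap l ζ)) ^ 2 := by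
          rw [hid]
          exact sq_add_bound _ _ _ hn1
        calc wt N β ζ * (f (ap (e :: l) ζ) - f ζ) ^ 2
            ≤ wt N β ζ * ((1 + 1 / (n:ℝ)) * (f (ap l ζ) - f ζ) ^ 2
                + (1 + (n:ℝ)) * (grad f e.1 e.2 (ap l ζ)) ^ 2) :=
              mul_le_mul_of_nonneg_left hsq (wt_nonneg β ζ)
          _ = (1 + 1 / (n:ℝ)) * (wt N β ζ * (f (ap l ζ) - f ζ) ^ 2)
              + (1 + (n:ℝ)) * (wt N β ζ * (grad f e.1 e.2 (ap l ζ)) ^ 2) := by ring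
      set X := Real.exp (β * n / N) with hX
      set M := (l.map (fun e' => ∑ ζ ∈ OmegaF N, wt N β ζ * (grad f e'.1 e'.2 ζ) ^ 2)).sum
        with hM
      set S := ∑ ζ ∈ OmegaF N, wt N β ζ * (grad f e.1 e.2 ζ) ^ 2 with hS
      have hXpos : 0 < X := Real.exp_pos _
      have c1 : (1 + 1 / (n:ℝ)) * (∑ ζ ∈ OmegaF N, wt N β ζ * (f (ap l ζ) - f ζ) ^ 2)
          ≤ (1 + 1 / (n:ℝ)) * ((n:ℝ) * X * M) := by
        apply mul_le_mul_of_nonneg_left ihl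
        have : (0:ℝ) < (n:ℝ) := by linarith
        positivity
      have c2 : (1 + (n:ℝ)) * (∑ ζ ∈ OmegaF N, wt N β ζ * (grad f e.1 e.2 (ap l ζ)) ^ 2)
          ≤ (1 + (n:ℝ)) * (X * S) := by
        apply mul_le_mul_of_nonneg_left hBsum
        linarith
      have hfact : (1 + 1 / (n:ℝ)) * ((n:ℝ) * X * M) = ((n:ℝ) + 1) * X * M := by
        have h0 : (n:ℝ) ≠ 0 := by linarith
        field_simp
      have hXle : X ≤ Real.exp (β * ((n:ℝ) + 1) / N) := by
        rw [hX]
        apply Real.exp_le_exp.2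
        gcongr
        linarith
      have hS_nonneg : 0 ≤ S := hSg_nonneg e
      have hstep : ((n:ℝ) + 1) * X * M + (1 + (n:ℝ)) * (X * S)
          ≤ ((n:ℝ) + 1) * Real.exp (β * ((n:ℝ) + 1) / N) * (S + M) := by
        have e1 : ((n:ℝ) + 1) * X * M + (1 + (n:ℝ)) * (X * S)
            = ((n:ℝ) + 1) * X * (S + M) := by ring
        rw [e1]
        apply mul_le_mul_of_nonneg_right _ (by linarith)
        apply mul_le_mul_of_nonneg_left hXle (by linarith)
      have hfin : ∑ ζ ∈ OmegaF N, wt N β ζ * (f (ap (e :: l) ζ) - f ζ) ^ 2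
          ≤ ((n:ℝ) + 1) * Real.exp (β * ((n:ℝ) + 1) / N) * (S + M) := by
        calc ∑ ζ ∈ OmegaF N, wt N β ζ * (f (ap (e :: l) ζ) - f ζ) ^ 2
            ≤ (1 + 1 / (n:ℝ)) * (∑ ζ ∈ OmegaF N, wt N β ζ * (f (ap l ζ) - f ζ) ^ 2)
              + (1 + (n:ℝ)) * (∑ ζ ∈ OmegaF N, wt N β ζ * (grad f e.1 e.2 (ap l ζ)) ^ 2) := key
          _ ≤ (1 + 1 / (n:ℝ)) * ((n:ℝ) * X * M) + (1 + (n:ℝ)) * (X * S) := add_le_add c1 c2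
          _ = ((n:ℝ) + 1) * X * M + (1 + (n:ℝ)) * (X * S) := by rw [hfact]
          _ ≤ ((n:ℝ) + 1) * Real.exp (β * ((n:ℝ) + 1) / N) * (S + M) := hstep
      simp only [List.map_cons, List.sum_cons, List.length_cons]
      push_cast
      exact hfin
end AuxProof

section AuxProof2
variable {N : ℕ}

lemma cnn_ge {β : ℝ} (hβ : 0 ≤ β) (x : Fin N) (ζ : Fin N → Fin 3) :
    Real.exp (-(β / (2 * N))) ≤ cnn β x ζ := by
  unfold cnn
  split_ifs
  · exact le_refl _
  · apply Real.exp_le_exp.2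
    have h0 : 0 ≤ β / (2 * (N:ℝ)) := by positivity
    linarith

lemma cnn_nonneg (β : ℝ) (x : Fin N) (ζ : Fin N → Fin 3) : 0 ≤ cnn β x ζ := by
  unfold cnn; split_ifs <;> exact (Real.exp_pos _).le

lemma fsucc_eq_of_adj {e : Fin N × Fin N} (h : ((e.2 : Fin N) : ℕ) = ((e.1 : Fin N) : ℕ) + 1) :
    fsucc e.1 = e.2 := by
  have h2 := e.2.isLt
  apply Fin.ext
  show ((e.1 : ℕ) + 1) % N = (e.2 : ℕ)
  rw [← h]
  exact Nat.mod_eq_of_lt h2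

lemma ccg_symm (β : ℝ) (x y : Fin N) : ccg β x y = ccg β y x := by
  unfold ccg
  funext ζ
  rw [exch_symm]

lemma grad_symm (f : (Fin N → Fin 3) → ℝ) (x y : Fin N) : grad f x y = grad f y x := by
  unfold grad
  funext ζ
  rw [exch_symm]

lemma path_exists (hN : 0 < N) : ∀ d : ℕ, 1 ≤ d → ∀ x y : Fin N, (y : ℕ) = (x : ℕ) + d →
    ∃ l : List (Fin N × Fin N), Good l ∧ (∀ ζ, ap l ζ = exch ζ x y) ∧
      l.length = 2 * d - 1 ∧
      ∀ g : Fin N → ℝ, (∀ z, 0 ≤ g z) →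
        (l.map (fun e => g e.1)).sum ≤ 2 * ∑ z ∈ Finset.univ.filter
            (fun z : Fin N => (x : ℕ) ≤ (z : ℕ) ∧ (z : ℕ) < (y : ℕ)), g z := by
  intro d
  induction d with
  | zero => omega
  | succ d ih =>
    intro _ x y hy
    rcases Nat.eq_zero_or_pos d with hd0 | hdpos
    · subst hd0
      refine ⟨[(x, y)], ?_, ?_, ?_, ?_⟩
      · intro e he
        simp only [List.mem_singleton] at he
        subst he
        exact hy
      · intro ζ; rfl
      · simp
      · intro g hg
        simp only [List.map_cons, List.map_nil, List.sum_cons, List.sum_nil, add_zero]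
        have hx : x ∈ Finset.univ.filter
            (fun z : Fin N => (x : ℕ) ≤ (z : ℕ) ∧ (z : ℕ) < (y : ℕ)) := by
          simp only [Finset.mem_filter, Finset.mem_univ, true_and]
          omega
        have h1 : g x ≤ ∑ z ∈ Finset.univ.filter
            (fun z : Fin N => (x : ℕ) ≤ (z : ℕ) ∧ (z : ℕ) < (y : ℕ)), g z :=
          Finset.single_le_sum (fun i _ => hg i) hx
        have h2 : 0 ≤ ∑ z ∈ Finset.univ.filter
            (fun z : Fin N => (x : ℕ) ≤ (z : ℕ) ∧ (z : ℕ) < (y : ℕ)), g z :=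
          Finset.sum_nonneg fun i _ => hg i
        linarith
    · have hqlt : (x : ℕ) + d < N := by have := y.isLt; omega
      set q : Fin N := ⟨(x : ℕ) + d, hqlt⟩ with hqdef
      have hqv : (q : ℕ) = (x : ℕ) + d := rfl
      obtain ⟨l₀, hg₀, hap₀, hlen₀, hsum₀⟩ := ih hdpos x q rfl
      have hyq : (y : ℕ) = (q : ℕ) + 1 := by omega
      have hxq : x ≠ q := by
        intro h; rw [h] at hqv; omega
      have hxy : x ≠ y := by
        intro h; rw [← h] at hy; omega
      have hqy : q ≠ y := by
        intro h; rw [h] at hqv; omega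
      refine ⟨(q, y) :: l₀ ++ [(q, y)], ?_, ?_, ?_, ?_⟩
      · intro e he
        have he' : e = (q, y) ∨ e ∈ l₀ := by
          simp only [List.mem_cons, List.mem_append, List.mem_singleton] at he
          tauto
        rcases he' with rfl | he'
        · exact hyq
        · exact hg₀ e he' 
      · intro ζ
        simp only [ap_cons, ap_append, ap_nil, hap₀]
        exact exch_conj ζ x q y hxq hxy hqy
      · have hlen : ((q, y) :: l₀ ++ [(q, y)]).length = l₀.length + 2 := by
          simp
        rw [hlen, hlen₀]
        omega
      · intro g hg
        simp only [List.map_cons, List.map_append, List.map_nil, List.sum_cons,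
          List.sum_append, List.sum_nil, add_zero]
        have h0 := hsum₀ g hg
        have hset : Finset.univ.filter
            (fun z : Fin N => (x : ℕ) ≤ (z : ℕ) ∧ (z : ℕ) < (y : ℕ))
            = insert q (Finset.univ.filter
              (fun z : Fin N => (x : ℕ) ≤ (z : ℕ) ∧ (z : ℕ) < (q : ℕ))) := by
          ext z
          simp only [Finset.mem_filter, Finset.mem_univ, true_and, Finset.mem_insert,
            Fin.ext_iff, hqv]
          omega
        have hqnot : q ∉ Finset.univ.filter
            (fun z : Fin N => (x : ℕ) ≤ (z : ℕ) ∧ (z : ℕ) < (q : ℕ)) := by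
          simp only [Finset.mem_filter, Finset.mem_univ, true_and]
          omega
        rw [hset, Finset.sum_insert hqnot]
        linarith
end AuxProof2

section AuxProof3
variable {N : ℕ}


lemma arith_final {Nr nr S A B C D : ℝ} (hNr : 0 < Nr) (hn : nr ≤ 2 * Nr) (hnn : 0 ≤ nr)
    (hS : 0 ≤ S) (hA : 0 ≤ A) (hB : 0 ≤ B) (hC : 0 ≤ C) (hD : 0 ≤ D)
    (hABC : A * B * C ≤ D) :
    (1 / Nr) * A * (nr * B * (C * (2 * S))) ≤ 4 * D * S := by
  calc (1 / Nr) * A * (nr * B * (C * (2 * S))) = (2 * nr / Nr) * ((A * B * C) * S) := by ring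
    _ ≤ (2 * nr / Nr) * (D * S) := by
        apply mul_le_mul_of_nonneg_left _ (by positivity)
        exact mul_le_mul_of_nonneg_right hABC hS
    _ ≤ 4 * (D * S) := by
        apply mul_le_mul_of_nonneg_right _ (mul_nonneg hD hS)
        rw [div_le_iff₀ hNr]
        linarith
    _ = 4 * D * S := by ring

set_option maxHeartbeats 1000000 in
lemma perpair {β : ℝ} (hβ : 0 ≤ β) (hN : 0 < N) (f : (Fin N → Fin 3) → ℝ)
    {x y : Fin N} (hxy : (x : ℕ) < (y : ℕ)) :
    ∑ ζ ∈ OmegaF N, wt N β ζ * (ccg β x y ζ * grad f x y ζ ^ 2)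
      ≤ 4 * Real.exp (3 * β) *
        ∑ z : Fin N, ∑ ζ ∈ OmegaF N, wt N β ζ * (cnn β z ζ * grad f z (fsucc z) ζ ^ 2) := by
  have hNr : (0:ℝ) < (N:ℝ) := by exact_mod_cast hN
  set d := (y : ℕ) - (x : ℕ) with hd
  have hd1 : 1 ≤ d := by omega
  obtain ⟨l, hg, hap, hlen, hcnt⟩ := path_exists hN d hd1 x y (by omega)
  set n := l.length with hn
  have hnN : n ≤ 2 * N - 1 := by
    have := y.isLt; omega
  have h2n : (n:ℝ) ≤ 2 * (N:ℝ) := by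
    have : n ≤ 2 * N := by omega
    exact_mod_cast this
  set SS := ∑ z : Fin N, ∑ ζ ∈ OmegaF N, wt N β ζ * (cnn β z ζ * grad f z (fsucc z) ζ ^ 2)
    with hSS
  have hSg'_nonneg : ∀ z : Fin N,
      0 ≤ ∑ ζ ∈ OmegaF N, wt N β ζ * (cnn β z ζ * grad f z (fsucc z) ζ ^ 2) := by
    intro z
    exact Finset.sum_nonneg fun ζ _ => mul_nonneg (wt_nonneg β ζ)
      (mul_nonneg (cnn_nonneg β z ζ) (sq_nonneg _))
  have hSS_nonneg : 0 ≤ SS := Finset.sum_nonneg fun z _ => hSg'_nonneg z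
  -- pointwise bound on the complete-graph rate
  have hccg : ∀ ζ, ccg β x y ζ ≤ (1 / (N:ℝ)) * Real.exp (β * n / (2 * N)) := by
    intro ζ
    unfold ccg
    apply mul_le_mul_of_nonneg_left _ (by positivity : (0:ℝ) ≤ 1 / (N:ℝ))
    apply Real.exp_le_exp.2
    have habs : |HN (exch ζ x y) - HN ζ| ≤ (n:ℝ) / (N:ℝ) ^ 2 := by
      rw [← hap ζ]; exact HN_ap_bound hg ζ
    have hb : (0:ℝ) ≤ β * N / 2 := by positivity
    have h1 : -(β * N / 2) * (HN (exch ζ x y) - HN ζ)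
        ≤ (β * N / 2) * ((n:ℝ) / (N:ℝ) ^ 2) := by
      calc -(β * N / 2) * (HN (exch ζ x y) - HN ζ)
          = (β * N / 2) * (-(HN (exch ζ x y) - HN ζ)) := by ring
        _ ≤ (β * N / 2) * |HN (exch ζ x y) - HN ζ| :=
            mul_le_mul_of_nonneg_left (neg_le_abs _) hb
        _ ≤ (β * N / 2) * ((n:ℝ) / (N:ℝ) ^ 2) := mul_le_mul_of_nonneg_left habs hb
    have h2 : (β * (N:ℝ) / 2) * ((n:ℝ) / (N:ℝ) ^ 2) = β * n / (2 * N) := by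
      field_simp
    linarith
  -- Step 1 : pull out the rate
  have S1 : ∑ ζ ∈ OmegaF N, wt N β ζ * (ccg β x y ζ * grad f x y ζ ^ 2)
      ≤ (1 / (N:ℝ)) * Real.exp (β * n / (2 * N)) *
        ∑ ζ ∈ OmegaF N, wt N β ζ * (grad f x y ζ) ^ 2 := by
    rw [Finset.mul_sum]
    apply Finset.sum_le_sum
    intro ζ _
    calc wt N β ζ * (ccg β x y ζ * grad f x y ζ ^ 2)
        ≤ wt N β ζ * ((1 / (N:ℝ)) * Real.exp (β * n / (2 * N)) * grad f x y ζ ^ 2) :=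
          mul_le_mul_of_nonneg_left
            (mul_le_mul_of_nonneg_right (hccg ζ) (sq_nonneg _)) (wt_nonneg β ζ)
      _ = 1 / (N:ℝ) * Real.exp (β * n / (2 * N)) * (wt N β ζ * grad f x y ζ ^ 2) := by ring
  -- Step 2 : path decomposition
  have S2 : ∑ ζ ∈ OmegaF N, wt N β ζ * (grad f x y ζ) ^ 2
      ≤ (n:ℝ) * Real.exp (β * n / N) *
        (l.map (fun e => ∑ ζ ∈ OmegaF N, wt N β ζ * (grad f e.1 e.2 ζ) ^ 2)).sum := by
    have hgr : ∀ ζ, grad f x y ζ = f (ap l ζ) - f ζ := by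
      intro ζ; unfold grad; rw [hap ζ]
    calc ∑ ζ ∈ OmegaF N, wt N β ζ * (grad f x y ζ) ^ 2
        = ∑ ζ ∈ OmegaF N, wt N β ζ * (f (ap l ζ) - f ζ) ^ 2 :=
          Finset.sum_congr rfl fun ζ _ => by rw [hgr ζ]
      _ ≤ _ := sumS hβ hN f l hg
  -- Step 3 : compare with nearest-neighbour rates, elementwise on the path
  have S3 : (l.map (fun e => ∑ ζ ∈ OmegaF N, wt N β ζ * (grad f e.1 e.2 ζ) ^ 2)).sum
      ≤ Real.exp (β / (2 * N)) * (l.map (fun e =>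
          ∑ ζ ∈ OmegaF N, wt N β ζ * (cnn β e.1 ζ * grad f e.1 (fsucc e.1) ζ ^ 2))).sum := by
    rw [← List.sum_map_mul_left]
    apply List.sum_le_sum
    intro e he
    have hfs : fsucc e.1 = e.2 := fsucc_eq_of_adj (hg e he)
    rw [hfs]
    rw [Finset.mul_sum]
    apply Finset.sum_le_sum
    intro ζ _
    have h1 : (1:ℝ) ≤ Real.exp (β / (2 * N)) * cnn β e.1 ζ := by
      have hc := cnn_ge hβ e.1 ζ
      have he1 : Real.exp (β / (2 * N)) * Real.exp (-(β / (2 * N))) = 1 := by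
        rw [← Real.exp_add]; simp
      calc (1:ℝ) = Real.exp (β / (2 * N)) * Real.exp (-(β / (2 * N))) := he1.symm
        _ ≤ Real.exp (β / (2 * N)) * cnn β e.1 ζ :=
            mul_le_mul_of_nonneg_left hc (Real.exp_pos _).le
    calc wt N β ζ * grad f e.1 e.2 ζ ^ 2
        = (wt N β ζ * grad f e.1 e.2 ζ ^ 2) * 1 := by ring
      _ ≤ (wt N β ζ * grad f e.1 e.2 ζ ^ 2) * (Real.exp (β / (2 * N)) * cnn β e.1 ζ) :=
          mul_le_mul_of_nonneg_left h1 (mul_nonneg (wt_nonneg β ζ) (sq_nonneg _))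
      _ = Real.exp (β / (2 * N)) * (wt N β ζ * (cnn β e.1 ζ * grad f e.1 e.2 ζ ^ 2)) := by
          ring
  -- Step 4 : multiplicity bound
  have S4 : (l.map (fun e =>
        ∑ ζ ∈ OmegaF N, wt N β ζ * (cnn β e.1 ζ * grad f e.1 (fsucc e.1) ζ ^ 2))).sum
      ≤ 2 * SS := by
    have h1 := hcnt (fun z => ∑ ζ ∈ OmegaF N, wt N β ζ * (cnn β z ζ * grad f z (fsucc z) ζ ^ 2))
      hSg'_nonneg
    have h2 : ∑ z ∈ Finset.univ.filter
          (fun z : Fin N => (x : ℕ) ≤ (z : ℕ) ∧ (z : ℕ) < (y : ℕ)),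
          (∑ ζ ∈ OmegaF N, wt N β ζ * (cnn β z ζ * grad f z (fsucc z) ζ ^ 2)) ≤ SS := by
      apply Finset.sum_le_sum_of_subset_of_nonneg (Finset.filter_subset _ _)
      intro z _ _
      exact hSg'_nonneg z
    calc _ ≤ 2 * ∑ z ∈ Finset.univ.filter
          (fun z : Fin N => (x : ℕ) ≤ (z : ℕ) ∧ (z : ℕ) < (y : ℕ)),
          (∑ ζ ∈ OmegaF N, wt N β ζ * (cnn β z ζ * grad f z (fsucc z) ζ ^ 2)) := h1
      _ ≤ 2 * SS := by linarith
  -- combine everything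
  have hcs : β * n / (2 * N) + β * n / N + β / (2 * N) ≤ 3 * β := by
    have h6 : 3 * n + 1 ≤ 6 * N := by omega
    have h6r : 3 * (n:ℝ) + 1 ≤ 6 * (N:ℝ) := by exact_mod_cast h6
    have heq : β * n / (2 * N) + β * n / N + β / (2 * N)
        = β * ((3 * (n:ℝ) + 1) / (2 * N)) := by field_simp; ring
    rw [heq]
    have hq : (3 * (n:ℝ) + 1) / (2 * N) ≤ 3 := by
      rw [div_le_iff₀ (by positivity)]; linarith
    nlinarith
  have hE : Real.exp (β * n / (2 * N)) * Real.exp (β * n / N) * Real.exp (β / (2 * N))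
      ≤ Real.exp (3 * β) := by
    rw [← Real.exp_add, ← Real.exp_add]
    exact Real.exp_le_exp.2 hcs
  have hchain : ∑ ζ ∈ OmegaF N, wt N β ζ * (ccg β x y ζ * grad f x y ζ ^ 2)
      ≤ (1 / (N:ℝ)) * Real.exp (β * n / (2 * N)) *
        ((n:ℝ) * Real.exp (β * n / N) * (Real.exp (β / (2 * N)) * (2 * SS))) := by
    calc ∑ ζ ∈ OmegaF N, wt N β ζ * (ccg β x y ζ * grad f x y ζ ^ 2)
        ≤ (1 / (N:ℝ)) * Real.exp (β * n / (2 * N)) *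
            ∑ ζ ∈ OmegaF N, wt N β ζ * (grad f x y ζ) ^ 2 := S1
      _ ≤ (1 / (N:ℝ)) * Real.exp (β * n / (2 * N)) * ((n:ℝ) * Real.exp (β * n / N) *
            (l.map (fun e => ∑ ζ ∈ OmegaF N, wt N β ζ * (grad f e.1 e.2 ζ) ^ 2)).sum) :=
          mul_le_mul_of_nonneg_left S2 (by positivity)
      _ ≤ (1 / (N:ℝ)) * Real.exp (β * n / (2 * N)) * ((n:ℝ) * Real.exp (β * n / N) *
            (Real.exp (β / (2 * N)) * (l.map (fun e =>
              ∑ ζ ∈ OmegaF N, wt N β ζ * (cnn β e.1 ζ * grad f e.1 (fsucc e.1) ζ ^ 2))).sum)) := by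
          apply mul_le_mul_of_nonneg_left _ (by positivity)
          exact mul_le_mul_of_nonneg_left S3 (by positivity)
      _ ≤ (1 / (N:ℝ)) * Real.exp (β * n / (2 * N)) *
            ((n:ℝ) * Real.exp (β * n / N) * (Real.exp (β / (2 * N)) * (2 * SS))) := by
          apply mul_le_mul_of_nonneg_left _ (by positivity)
          apply mul_le_mul_of_nonneg_left _ (by positivity)
          exact mul_le_mul_of_nonneg_left S4 (Real.exp_pos _).le
  refine le_trans hchain (arith_final hNr h2n (by positivity) hSS_nonneg
    (Real.exp_pos _).le (Real.exp_pos _).le (Real.exp_pos _).le (Real.exp_pos _).le hE)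

end AuxProof3


/-- Comparison of Dirichlet forms:
`𝒟_N^β(f,f) ≤ 2 e^{3β} N² D_N^β(f,f)`. -/
theorem dirichlet_form_comparison (β : ℝ) (hβ : 0 ≤ β) (N : ℕ) (hN : 0 < N)
    (h3 : 3 ∣ N) (f : (Fin N → Fin 3) → ℝ) :
    Dcg N β f ≤ 2 * Real.exp (3 * β) * (N : ℝ) ^ 2 * Dnn N β f := by
  by_cases hE : OmegaF N = ∅
  · simp [Dcg, Dnn, expect, hE]
  · have hne : (OmegaF N).Nonempty := Finset.nonempty_iff_ne_empty.mpr hE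
    have hZ : 0 < Zpart N β := Finset.sum_pos (fun ζ _ => Real.exp_pos _) hne
    have hZ0 : Zpart N β ≠ 0 := ne_of_gt hZ
    set SS := ∑ z : Fin N, ∑ ζ ∈ OmegaF N, wt N β ζ * (cnn β z ζ * grad f z (fsucc z) ζ ^ 2)
      with hSS
    have hSS_nonneg : 0 ≤ SS := by
      apply Finset.sum_nonneg
      intro z _
      exact Finset.sum_nonneg fun ζ _ => mul_nonneg (wt_nonneg β ζ)
        (mul_nonneg (cnn_nonneg β z ζ) (sq_nonneg _))
    have hDnn_eq : Dnn N β f = SS / (2 * Zpart N β) := by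
      unfold Dnn
      rw [hSS]
      have h1 : ∀ z : Fin N, expect N β (fun ζ => cnn β z ζ * grad f z (fsucc z) ζ ^ 2)
          = (∑ ζ ∈ OmegaF N, wt N β ζ * (cnn β z ζ * grad f z (fsucc z) ζ ^ 2)) / Zpart N β :=
        fun z => expect_eq β _
      rw [Finset.sum_congr rfl fun z _ => h1 z, ← Finset.sum_div]
      field_simp
    have hDnn_nonneg : 0 ≤ Dnn N β f := by
      rw [hDnn_eq]
      positivity
    have key : ∀ x y : Fin N, x ≠ y →
        expect N β (fun ζ => ccg β x y ζ * grad f x y ζ ^ 2)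
          ≤ 8 * Real.exp (3 * β) * Dnn N β f := by
      have hwlog : ∀ u v : Fin N, (u : ℕ) < (v : ℕ) →
          expect N β (fun ζ => ccg β u v ζ * grad f u v ζ ^ 2)
            ≤ 8 * Real.exp (3 * β) * Dnn N β f := by
        intro u v huv
        rw [expect_eq]
        have hpp := perpair hβ hN f huv
        have hdiv : (∑ ζ ∈ OmegaF N, wt N β ζ * (ccg β u v ζ * grad f u v ζ ^ 2)) / Zpart N β
            ≤ (4 * Real.exp (3 * β) * SS) / Zpart N β := by
          gcongr
        have heq : (4 * Real.exp (3 * β) * SS) / Zpart N β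
            = 8 * Real.exp (3 * β) * (SS / (2 * Zpart N β)) := by
          field_simp
          ring
        rw [hDnn_eq]
        calc _ ≤ (4 * Real.exp (3 * β) * SS) / Zpart N β := hdiv
          _ = 8 * Real.exp (3 * β) * (SS / (2 * Zpart N β)) := heq
      intro x y hxy
      rcases lt_trichotomy (x : ℕ) (y : ℕ) with h | h | h
      · exact hwlog x y h
      · exact absurd (Fin.ext h) hxy
      · have hsw : (fun ζ => ccg β x y ζ * grad f x y ζ ^ 2)
            = (fun ζ => ccg β y x ζ * grad f y x ζ ^ 2) := by
          rw [ccg_symm, grad_symm]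
        rw [hsw]
        exact hwlog y x h
    have hconst : ∀ c : ℝ, (∑ _x : Fin N, ∑ _y : Fin N, c) = (N:ℝ) ^ 2 * c := by
      intro c
      simp [Finset.sum_const, Finset.card_univ, nsmul_eq_mul]
      ring
    have hsum : ∑ x : Fin N, ∑ y : Fin N,
        (if x ≠ y then expect N β (fun ζ => ccg β x y ζ * grad f x y ζ ^ 2) else 0)
        ≤ (N:ℝ) ^ 2 * (8 * Real.exp (3 * β) * Dnn N β f) := by
      rw [← hconst (8 * Real.exp (3 * β) * Dnn N β f)]
      apply Finset.sum_le_sum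
      intro x _
      apply Finset.sum_le_sum
      intro y _
      by_cases h : x = y
      · rw [if_neg (by simpa using h)]
        have : (0:ℝ) ≤ 8 * Real.exp (3 * β) := by positivity
        exact mul_nonneg this hDnn_nonneg
      · rw [if_pos h]
        exact key x y h
    unfold Dcg
    have hfin : (2:ℝ) * Real.exp (3 * β) * (N:ℝ) ^ 2 * Dnn N β f
        = (1/2) * ((1/2) * ((N:ℝ) ^ 2 * (8 * Real.exp (3 * β) * Dnn N β f))) := by
      ring
    rw [hfin]
    have h2 : (0:ℝ) ≤ 1/2 := by norm_num
    apply mul_le_mul_of_nonneg_left _ h2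
    apply mul_le_mul_of_nonneg_left _ h2
    exact hsum

end ABC
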